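/- arXiv:math/0205001 — 5 statements merged into one kernel-verified Lean document; each statement's English description precedes it below -/
import Mathlib

section
/- Let μ be a positive measure on ℝ^n absolutely continuous with respect to Lebesgue measure, Q a cube with 0 < μ(Q) < ∞, and f a nonnegative μ-integrable function on Q. Suppose that for some 0 < α, β < 1 one has μ{x ∈ Q : f(x) > β·f_{Q,μ}} > α·μ(Q). Then Ω_μ(f; Q) ≤ 2(1 − αβ)·f_{Q,μ}. -/
open MeasureTheory

/-- A closed axis-parallel cube of positive side length in `ℝⁿ`. -/
def IsCube {n : ℕ} (Q : Set (Fin n → ℝ)) : Prop :=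
  ∃ (a : Fin n → ℝ) (h : ℝ), 0 < h ∧ Q = Set.Icc a (fun i => a i + h)

/-- The `μ`-average `f_{Q,μ} = (1/μ(Q)) ∫_Q f dμ`. -/
noncomputable def muAvg {n : ℕ} (μ : Measure (Fin n → ℝ)) (Q : Set (Fin n → ℝ))
    (f : (Fin n → ℝ) → ℝ) : ℝ :=
  (∫ x in Q, f x ∂μ) / (μ Q).toReal

/-- The mean oscillation `Ω_μ(f;Q) = (1/μ(Q)) ∫_Q |f − f_{Q,μ}| dμ`. -/
noncomputable def muOsc {n : ℕ} (μ : Measure (Fin n → ℝ)) (Q : Set (Fin n → ℝ))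
    (f : (Fin n → ℝ) → ℝ) : ℝ :=
  (∫ x in Q, |f x - muAvg μ Q f| ∂μ) / (μ Q).toReal

/-- Theorem 1(ii) of Korenovskyy–Lerner–Stokolos: if
`μ{x ∈ Q : f(x) > β f_{Q,μ}} > α μ(Q)` for some `0 < α, β < 1`, then
`Ω_μ(f;Q) ≤ 2(1 − αβ) f_{Q,μ}`. -/
theorem stmt1 {n : ℕ} (μ : Measure (Fin n → ℝ)) (hac : μ ≪ volume)
    (Q : Set (Fin n → ℝ)) (hQ : IsCube Q) (hQpos : 0 < μ Q) (hQfin : μ Q < ⊤)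
    (f : (Fin n → ℝ) → ℝ) (hf0 : ∀ x ∈ Q, 0 ≤ f x) (hfint : IntegrableOn f Q μ)
    (α β : ℝ) (hα0 : 0 < α) (hα1 : α < 1) (hβ0 : 0 < β) (hβ1 : β < 1)
    (hA : ENNReal.ofReal α * μ Q < μ {x ∈ Q | f x > β * muAvg μ Q f}) :
    muOsc μ Q f ≤ 2 * (1 - α * β) * muAvg μ Q f := by
  obtain ⟨a, hside, hhpos, hQeq⟩ := hQ
  have hQm : MeasurableSet Q := by rw [hQeq]; exact measurableSet_Icc
  haveI : IsFiniteMeasure (μ.restrict Q) :=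
    ⟨by rwa [Measure.restrict_apply_univ]⟩
  have hMQpos : 0 < (μ Q).toReal := ENNReal.toReal_pos hQpos.ne' hQfin.ne
  set M := (μ Q).toReal with hM
  set c := muAvg μ Q f with hcdef
  have hc0 : 0 ≤ c := by
    apply div_nonneg _ hMQpos.le
    exact setIntegral_nonneg hQm hf0
  obtain ⟨f', hf'm, hff'⟩ := hfint.1
  have hae : ∀ᵐ x ∂μ, x ∈ Q → f x = f' x := (ae_restrict_iff' hQm).mp hff'
  set E := {x ∈ Q | f x > β * c} with hE
  set E' := Q ∩ {x | f' x > β * c} with hE'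
  have hE'm : MeasurableSet E' :=
    hQm.inter (measurableSet_lt measurable_const hf'm.measurable)
  have hEE' : μ E = μ E' := by
    apply measure_congr
    filter_upwards [hae] with x hx
    simp only [hE, hE', Set.mem_setOf_eq, Set.mem_inter_iff, eq_iff_iff]
    constructor
    · rintro ⟨hxQ, hxf⟩; exact ⟨hxQ, show β * c < f' x by rw [← hx hxQ]; exact hxf⟩
    · rintro ⟨hxQ, hxf⟩; exact ⟨hxQ, show β * c < f x by rw [hx hxQ]; exact hxf⟩
  have hconst : Integrable (fun _ => c) (μ.restrict Q) := integrable_const c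
  have hsub : Integrable (fun x => f x - c) (μ.restrict Q) := hfint.sub hconst
  have hmax : Integrable (fun x => max (c - f x) 0) (μ.restrict Q) :=
    (hconst.sub hfint).pos_part
  have hI0 : ∫ x in Q, (f x - c) ∂μ = 0 := by
    rw [integral_sub hfint hconst, setIntegral_const, smul_eq_mul, measureReal_def, hcdef, muAvg, ← hM,
      mul_div_cancel₀ _ hMQpos.ne']
    ring
  have habs : ∫ x in Q, |f x - c| ∂μ = 2 * ∫ x in Q, max (c - f x) 0 ∂μ := by
    have hpt : ∀ x, |f x - c| = (f x - c) + 2 * max (c - f x) 0 := by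
      intro x; rcases le_total (f x) c with h | h
      · rw [abs_of_nonpos (by linarith), max_eq_left (by linarith)]; ring
      · rw [abs_of_nonneg (by linarith), max_eq_right (by linarith)]; ring
    simp_rw [hpt]
    rw [integral_add hsub (hmax.const_mul 2), hI0, zero_add, integral_const_mul]
  have hind : Integrable (E'.indicator fun _ => β * c) (μ.restrict Q) :=
    (integrable_const (β * c)).indicator hE'm
  have hg : Integrable (fun x => c - E'.indicator (fun _ => β * c) x) (μ.restrict Q) :=
    hconst.sub hind
  have hbound : ∫ x in Q, max (c - f x) 0 ∂μ ≤ c * M - β * c * (μ E').toReal := by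
    have hle : ∀ᵐ x ∂μ.restrict Q,
        max (c - f x) 0 ≤ c - E'.indicator (fun _ => β * c) x := by
      filter_upwards [hff', ae_restrict_mem hQm] with x hfx hxQ
      by_cases hx : x ∈ E'
      · rw [Set.indicator_of_mem hx]
        have hf'x : β * c < f' x := hx.2
        have hfxg : β * c < f x := by rw [hfx]; exact hf'x
        have h2 : (0:ℝ) ≤ c - β * c := by nlinarith
        exact max_le (by linarith) h2
      · rw [Set.indicator_of_notMem hx]
        have := hf0 x hxQ
        simp only [sub_zero]
        exact max_le (by linarith) hc0
    calc ∫ x in Q, max (c - f x) 0 ∂μ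
        ≤ ∫ x in Q, (c - E'.indicator (fun _ => β * c) x) ∂μ :=
          integral_mono_ae hmax hg hle
      _ = c * M - β * c * (μ E').toReal := by
          rw [integral_sub hconst hind, setIntegral_const, setIntegral_indicator hE'm,
            setIntegral_const]
          have hQE' : Q ∩ E' = E' := by
            rw [hE', ← Set.inter_assoc, Set.inter_self]
          rw [hQE', smul_eq_mul, smul_eq_mul]
          simp only [measureReal_def, hM]
          ring
  have hE'le : μ E' ≤ μ Q := measure_mono Set.inter_subset_left
  have hE'fin : μ E' ≠ ⊤ := (lt_of_le_of_lt hE'le hQfin).ne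
  have hAreal : α * M < (μ E').toReal := by
    have h := hA
    rw [hEE'] at h
    have h1 : (ENNReal.ofReal α * μ Q).toReal < (μ E').toReal :=
      ENNReal.toReal_strict_mono hE'fin h
    rwa [ENNReal.toReal_mul, ENNReal.toReal_ofReal hα0.le, ← hM] at h1
  have hfinal : β * c * (α * M) ≤ β * c * (μ E').toReal :=
    mul_le_mul_of_nonneg_left hAreal.le (by positivity)
  have hgoal : muOsc μ Q f = (∫ x in Q, |f x - c| ∂μ) / M := by
    rw [muOsc, ← hcdef, ← hM]
  rw [hgoal, habs, div_le_iff₀ hMQpos]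
  have h3 : 2 * ∫ x in Q, max (c - f x) 0 ∂μ ≤ 2 * c * M - 2 * (β * c * (α * M)) := by
    linarith
  have h4 : 2 * c * M - 2 * (β * c * (α * M)) = 2 * (1 - α * β) * c * M := by ring
  linarith
end

section
/- Let μ be a positive measure on ℝ^n absolutely continuous with respect to Lebesgue measure, Q_0 a cube with 0 < μ(Q) < ∞ for every subcube Q ⊆ Q_0, and f a nonnegative μ-integrable function on Q_0. If f satisfies the Muckenhoupt A_∞(μ) condition on Q_0 with constants 0 < α, β < 1, then f satisfies the Gurov–Reshetnyak condition GR_μ(ε_0) on Q_0 with ε_0 = 2(1 − αβ), and 0 < ε_0 < 2. -/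
open MeasureTheory

/-- The Gurov–Reshetnyak condition `GR_μ(ε)` on the cube `Q₀`. -/
def GurovReshetnyak {n : ℕ} (μ : Measure (Fin n → ℝ)) (Q₀ : Set (Fin n → ℝ))
    (f : (Fin n → ℝ) → ℝ) (ε : ℝ) : Prop :=
  ∀ Q : Set (Fin n → ℝ), IsCube Q → Q ⊆ Q₀ → muOsc μ Q f ≤ ε * muAvg μ Q f

/-- The Muckenhoupt `A_∞(μ)` condition on `Q₀` with constants `α, β`. -/
def AinfWith {n : ℕ} (μ : Measure (Fin n → ℝ)) (Q₀ : Set (Fin n → ℝ))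
    (f : (Fin n → ℝ) → ℝ) (α β : ℝ) : Prop :=
  ∀ Q : Set (Fin n → ℝ), IsCube Q → Q ⊆ Q₀ →
    ENNReal.ofReal α * μ Q < μ {x ∈ Q | f x > β * muAvg μ Q f}

/-- `A_∞(μ)` implies `GR_μ(ε₀)`: if `f` satisfies the Muckenhoupt `A_∞(μ)` condition
on `Q₀` with constants `0 < α, β < 1`, then `f` satisfies the Gurov–Reshetnyak
condition with `ε₀ = 2(1 − αβ)`, and `0 < ε₀ < 2`. -/
theorem stmt3 {n : ℕ} (μ : Measure (Fin n → ℝ)) (hac : μ ≪ volume)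
    (Q₀ : Set (Fin n → ℝ)) (hQ₀ : IsCube Q₀)
    (hQfin : ∀ Q : Set (Fin n → ℝ), IsCube Q → Q ⊆ Q₀ → 0 < μ Q ∧ μ Q < ⊤)
    (f : (Fin n → ℝ) → ℝ) (hf0 : ∀ x ∈ Q₀, 0 ≤ f x) (hfint : IntegrableOn f Q₀ μ)
    (α β : ℝ) (hα0 : 0 < α) (hα1 : α < 1) (hβ0 : 0 < β) (hβ1 : β < 1)
    (hA : AinfWith μ Q₀ f α β) :
    GurovReshetnyak μ Q₀ f (2 * (1 - α * β)) ∧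
      0 < 2 * (1 - α * β) ∧ 2 * (1 - α * β) < 2 := by
  have hε0 : 0 < 2 * (1 - α * β) := by nlinarith
  have hε2 : 2 * (1 - α * β) < 2 := by nlinarith
  refine ⟨?_, hε0, hε2⟩
  intro Q hQcube hQsub
  have hQmeas : MeasurableSet Q := by
    obtain ⟨a, h, -, rfl⟩ := hQcube
    exact measurableSet_Icc
  obtain ⟨hQpos, hQfin'⟩ := hQfin Q hQcube hQsub
  set m : ℝ := (μ Q).toReal with hm_def
  have hm : 0 < m := ENNReal.toReal_pos hQpos.ne' hQfin'.ne
  have hfQ : IntegrableOn f Q μ := hfint.mono_set hQsub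
  have aesm := hfQ.aestronglyMeasurable
  set g : (Fin n → ℝ) → ℝ := fun x => max (aesm.mk f x) 0 with hg_def
  have hg_meas : Measurable g := aesm.stronglyMeasurable_mk.measurable.max measurable_const
  have hfg : f =ᵐ[μ.restrict Q] g := by
    filter_upwards [aesm.ae_eq_mk, ae_restrict_mem hQmeas] with x hx hxQ
    have h0 : 0 ≤ f x := hf0 x (hQsub hxQ)
    simp [hg_def, ← hx, max_eq_left h0]
  have hg0 : ∀ x, 0 ≤ g x := fun x => le_max_right _ _
  set avg : ℝ := muAvg μ Q f with havg_def
  have havg0 : 0 ≤ avg :=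
    div_nonneg (setIntegral_nonneg hQmeas fun x hx => hf0 x (hQsub hx)) ENNReal.toReal_nonneg
  have hgint : IntegrableOn g Q μ := hfQ.congr hfg
  have hIg : ∫ x in Q, g x ∂μ = ∫ x in Q, f x ∂μ := (integral_congr_ae hfg).symm
  set c : ℝ := β * avg with hc_def
  set E : Set (Fin n → ℝ) := Q ∩ {x | c < g x} with hE_def
  have hEmeas : MeasurableSet E :=
    hQmeas.inter (hg_meas measurableSet_Ioi)
  have hEQ : E ⊆ Q := Set.inter_subset_left
  -- measure of the bad set where f ≠ g is zero
  have hN : μ ({x | f x ≠ g x} ∩ Q) = 0 := by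
    have h1 : μ.restrict Q {x | f x ≠ g x} = 0 := ae_iff.1 hfg
    rwa [Measure.restrict_apply' hQmeas] at h1
  have hEf : μ {x ∈ Q | f x > c} = μ E := by
    refine measure_congr (MeasureTheory.ae_eq_set.2 ⟨measure_mono_null ?_ hN,
      measure_mono_null ?_ hN⟩)
    · rintro x ⟨⟨hxQ, hfc⟩, hxE⟩
      refine ⟨fun hfgx => hxE ⟨hxQ, ?_⟩, hxQ⟩
      simpa [hE_def, ← hfgx] using hfc
    · rintro x ⟨⟨hxQ, hgc⟩, hxE⟩
      refine ⟨fun hfgx => hxE ⟨hxQ, ?_⟩, hxQ⟩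
      simpa [hfgx] using hgc
  have hE : ENNReal.ofReal α * μ Q < μ E := hEf ▸ hA Q hQcube hQsub
  have hEfin : μ E < ⊤ := lt_of_le_of_lt (measure_mono hEQ) hQfin'
  set e : ℝ := (μ E).toReal with he_def
  have hEα : α * m < e := by
    have h2 : (ENNReal.ofReal α * μ Q).toReal < (μ E).toReal :=
      (ENNReal.toReal_lt_toReal (ENNReal.mul_ne_top ENNReal.ofReal_ne_top hQfin'.ne)
        hEfin.ne).2 hE
    rwa [ENNReal.toReal_mul, ENNReal.toReal_ofReal hα0.le] at h2
  have heQ : e ≤ m := ENNReal.toReal_mono hQfin'.ne (measure_mono hEQ)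
  -- positive and negative parts
  set p : (Fin n → ℝ) → ℝ := fun x => max (g x - avg) 0 with hp_def
  set q : (Fin n → ℝ) → ℝ := fun x => max (avg - g x) 0 with hq_def
  have hconst : IntegrableOn (fun _ => avg) Q μ := integrableOn_const hQfin'.ne
  have hpint : IntegrableOn p Q μ := (hgint.sub hconst).pos_part
  have hqint : IntegrableOn q Q μ := (hconst.sub hgint).pos_part
  have havgI : avg * m = ∫ x in Q, f x ∂μ := by
    rw [havg_def, muAvg, ← hm_def]
    field_simp
  have hpq : ∫ x in Q, p x ∂μ = ∫ x in Q, q x ∂μ := by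
    have h1 : ∀ x, p x - q x = g x - avg := by
      intro x
      rw [hp_def, hq_def]
      simp only
      rw [show avg - g x = -(g x - avg) by ring, max_zero_sub_max_neg_zero_eq_self]
    have h2 : ∫ x in Q, (p x - q x) ∂μ = ∫ x in Q, (g x - avg) ∂μ := by
      exact integral_congr_ae (Filter.Eventually.of_forall fun x => h1 x)
    rw [integral_sub hpint hqint, integral_sub hgint hconst, setIntegral_const,
      smul_eq_mul, hIg, ← havgI] at h2
    have : μ.real Q * avg = avg * m := by rw [measureReal_def, ← hm_def]; ring
    rw [this] at h2
    linarith
  have habs : ∫ x in Q, |f x - avg| ∂μ = 2 * ∫ x in Q, q x ∂μ := by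
    have h1 : ∫ x in Q, |f x - avg| ∂μ = ∫ x in Q, (p x + q x) ∂μ := by
      refine integral_congr_ae ?_
      filter_upwards [hfg] with x hx
      rw [hx, hp_def, hq_def]
      simp only
      rw [show avg - g x = -(g x - avg) by ring, max_zero_add_max_neg_zero_eq_abs_self]
    rw [h1, integral_add hpint hqint, hpq]
    ring
  -- bound the negative part integral
  have hqsplit : ∫ x in Q, q x ∂μ = (∫ x in E, q x ∂μ) + ∫ x in Q \ E, q x ∂μ := by
    rw [← MeasureTheory.setIntegral_union (disjoint_sdiff_self_right) (hQmeas.diff hEmeas)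
      (hqint.mono_set hEQ) (hqint.mono_set Set.diff_subset), Set.union_diff_cancel hEQ]
  have hbound1 : ∫ x in E, q x ∂μ ≤ (1 - β) * avg * e := by
    have h1 : ∫ x in E, q x ∂μ ≤ ∫ x in E, ((1 - β) * avg) ∂μ := by
      refine setIntegral_mono_on (hqint.mono_set hEQ)
        (integrableOn_const hEfin.ne) hEmeas ?_
      rintro x ⟨hxQ, hgc⟩
      have hgc' : c < g x := hgc
      refine max_le ?_ (by nlinarith)
      rw [hc_def] at hgc'
      nlinarith
    rwa [setIntegral_const, smul_eq_mul, measureReal_def, ← he_def, mul_comm e] at h1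
  have hbound2 : ∫ x in Q \ E, q x ∂μ ≤ avg * (m - e) := by
    have hdiff : (μ (Q \ E)).toReal = m - e := by
      rw [measure_diff hEQ hEmeas.nullMeasurableSet hEfin.ne,
        ENNReal.toReal_sub_of_le (measure_mono hEQ) hQfin'.ne]
    have h1 : ∫ x in Q \ E, q x ∂μ ≤ ∫ x in Q \ E, avg ∂μ := by
      refine setIntegral_mono_on (hqint.mono_set Set.diff_subset)
        (integrableOn_const (lt_of_le_of_lt (measure_mono Set.diff_subset) hQfin').ne)
        (hQmeas.diff hEmeas) ?_
      rintro x ⟨hxQ, -⟩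
      exact max_le (by linarith [hg0 x]) havg0
    rwa [setIntegral_const, smul_eq_mul, measureReal_def, hdiff, mul_comm] at h1
  have hqbound : ∫ x in Q, q x ∂μ ≤ (1 - α * β) * avg * m := by
    rw [hqsplit]
    have hkey : β * avg * (α * m) ≤ β * avg * e :=
      mul_le_mul_of_nonneg_left hEα.le (mul_nonneg hβ0.le havg0)
    nlinarith [hbound1, hbound2, hkey]
  -- conclude
  show muOsc μ Q f ≤ 2 * (1 - α * β) * avg
  rw [muOsc, ← havg_def, ← hm_def, div_le_iff₀ hm, habs]
  nlinarith
end

section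
/- Let μ be a positive measure on ℝ^n absolutely continuous with respect to Lebesgue measure, Q a cube with 0 < μ(Q) < ∞, and f a nonnegative μ-integrable function on Q satisfying Ω_μ(f; Q) ≤ ε·f_{Q,μ} for some 0 < ε < 2. Let ε < λ < 2 and let s ≥ 0 be any number such that μ{x ∈ Q : f(x) > s} < (1 − λ/2)·μ(Q). Then f_{Q,μ} ≤ (λ/(λ − ε))·s. -/
open MeasureTheory

/-- Inequality (4) of Korenovskyy–Lerner–Stokolos: if `Ω_μ(f;Q) ≤ ε f_{Q,μ}` with
`0 < ε < 2`, `ε < λ < 2`, and `s ≥ 0` satisfies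
`μ{x ∈ Q : f(x) > s} < (1 − λ/2) μ(Q)`, then `f_{Q,μ} ≤ (λ/(λ − ε)) s`. -/
theorem stmt7 {n : ℕ} (μ : Measure (Fin n → ℝ)) (hac : μ ≪ volume)
    (Q : Set (Fin n → ℝ)) (hQ : IsCube Q) (hQpos : 0 < μ Q) (hQfin : μ Q < ⊤)
    (f : (Fin n → ℝ) → ℝ) (hf0 : ∀ x ∈ Q, 0 ≤ f x) (hfint : IntegrableOn f Q μ)
    (ε : ℝ) (hε0 : 0 < ε) (hε2 : ε < 2)
    (hGR : muOsc μ Q f ≤ ε * muAvg μ Q f)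
    (l : ℝ) (hl1 : ε < l) (hl2 : l < 2)
    (s : ℝ) (hs : 0 ≤ s)
    (hμs : μ {x ∈ Q | f x > s} < ENNReal.ofReal (1 - l / 2) * μ Q) :
    muAvg μ Q f ≤ l / (l - ε) * s := by
  have hQm : MeasurableSet Q := by
    obtain ⟨a, h, _, rfl⟩ := hQ; exact measurableSet_Icc
  have hlε : 0 < l - ε := by linarith
  have ht : 0 < (μ Q).toReal := ENNReal.toReal_pos hQpos.ne' hQfin.ne
  set A := muAvg μ Q f with hA
  have hfin : IsFiniteMeasure (μ.restrict Q) :=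
    ⟨by rwa [Measure.restrict_apply_univ]⟩
  have hintA : ∫ x in Q, f x ∂μ = A * (μ Q).toReal := by
    rw [hA, muAvg]; field_simp
  -- case A ≤ s is easy
  rcases le_or_gt A s with hAs | hAs
  · have h1 : s ≤ l / (l - ε) * s := by
      rw [div_mul_eq_mul_div, le_div_iff₀ hlε]; nlinarith
    linarith
  -- main case : s < A
  have hconstA : IntegrableOn (fun _ => A) Q μ := integrableOn_const hQfin.ne
  have hmax : IntegrableOn (fun x => max (A - f x) 0) Q μ :=
    (hconstA.sub hfint).pos_part
  have h0 : ∫ x in Q, (f x - A) ∂μ = 0 := by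
    rw [integral_sub hfint hconstA, integral_const, measureReal_restrict_apply_univ, measureReal_def,
      hintA, smul_eq_mul]
    ring
  have habs : ∀ x, |f x - A| = (f x - A) + 2 * max (A - f x) 0 := by
    intro x
    rcases le_total A (f x) with h' | h'
    · rw [abs_of_nonneg (by linarith), max_eq_right (by linarith)]; ring
    · rw [abs_of_nonpos (by linarith), max_eq_left (by linarith)]; ring
  have hosc_int : ∫ x in Q, |f x - A| ∂μ = 2 * ∫ x in Q, max (A - f x) 0 ∂μ := by
    simp_rw [habs]
    have hsub : Integrable (fun x => f x - A) (μ.restrict Q) := hfint.sub hconstA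
    rw [integral_add hsub (hmax.const_mul 2), h0, integral_const_mul]
    ring
  have hGR' : ∫ x in Q, |f x - A| ∂μ ≤ ε * A * (μ Q).toReal := by
    have := hGR
    rw [muOsc, div_le_iff₀ ht] at this
    calc ∫ x in Q, |f x - A| ∂μ = ∫ x in Q, |f x - muAvg μ Q f| ∂μ := by rw [← hA]
      _ ≤ ε * muAvg μ Q f * (μ Q).toReal := this
      _ = ε * A * (μ Q).toReal := by rw [← hA]
  -- measurable representative
  have hfg := hfint.1.ae_eq_mk
  set g := hfint.1.mk f with hg
  have hgm : StronglyMeasurable g := hfint.1.stronglyMeasurable_mk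
  set E : Set (Fin n → ℝ) := Q ∩ {x | s < g x} with hE
  have hEm : MeasurableSet E :=
    hQm.inter (measurableSet_lt measurable_const hgm.measurable)
  have hEsub : E ⊆ Q := Set.inter_subset_left
  have hEeq : μ {x ∈ Q | f x > s} = μ E := by
    have h1 : {x ∈ Q | f x > s} = {x | s < f x} ∩ Q := by
      ext x; simp [Set.mem_setOf_eq, and_comm]
    have h2 : E = {x | s < g x} ∩ Q := by rw [hE, Set.inter_comm]
    rw [h1, h2, ← Measure.restrict_apply' hQm, ← Measure.restrict_apply' hQm]
    exact measure_congr (hfg.mono fun x hx => by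
      change (s < f x) = (s < g x); rw [hx])
  -- measure arithmetic
  have hsum : μ E + μ (Q \ E) = μ Q := by
    have := measure_inter_add_diff (μ := μ) Q hEm
    rwa [Set.inter_eq_self_of_subset_right hEsub] at this
  have hEfin : μ E ≠ ⊤ := ((measure_mono hEsub).trans_lt hQfin).ne
  have hDfin : μ (Q \ E) ≠ ⊤ := ((measure_mono Set.diff_subset).trans_lt hQfin).ne
  have hsumR : (μ E).toReal + (μ (Q \ E)).toReal = (μ Q).toReal := by
    rw [← ENNReal.toReal_add hEfin hDfin, hsum]
  have hl2' : (0:ℝ) ≤ 1 - l / 2 := by linarith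
  have hEsmall : (μ E).toReal < (1 - l / 2) * (μ Q).toReal := by
    have h' : μ E < ENNReal.ofReal (1 - l / 2) * μ Q := hEeq ▸ hμs
    have := ENNReal.toReal_lt_toReal hEfin
      (ENNReal.mul_ne_top ENNReal.ofReal_ne_top hQfin.ne) |>.mpr h'
    rwa [ENNReal.toReal_mul, ENNReal.toReal_ofReal hl2'] at this
  have hDbig : l / 2 * (μ Q).toReal < (μ (Q \ E)).toReal := by nlinarith
  -- integral bounds
  have hmaxD : IntegrableOn (fun x => max (A - f x) 0) (Q \ E) μ :=
    hmax.mono_set Set.diff_subset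
  have h1 : (A - s) * (μ (Q \ E)).toReal ≤ ∫ x in Q \ E, max (A - f x) 0 ∂μ := by
    have hfg' : f =ᵐ[μ.restrict (Q \ E)] g :=
      ae_restrict_of_ae_restrict_of_subset Set.diff_subset hfg
    have hmem := ae_restrict_mem (μ := μ) (hQm.diff hEm)
    have hptwise : ∀ᵐ x ∂μ.restrict (Q \ E), A - s ≤ max (A - f x) 0 := by
      filter_upwards [hfg', hmem] with x hx hxm
      have hgx : g x ≤ s := by
        by_contra hc
        exact hxm.2 ⟨hxm.1, lt_of_not_ge hc⟩
      have : f x ≤ s := hx ▸ hgx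
      exact le_trans (by linarith) (le_max_left _ _)
    calc (A - s) * (μ (Q \ E)).toReal
        = ∫ _x in Q \ E, (A - s) ∂μ := by
          rw [setIntegral_const, smul_eq_mul, mul_comm, measureReal_def]
      _ ≤ ∫ x in Q \ E, max (A - f x) 0 ∂μ :=
          integral_mono_ae (integrableOn_const (
            ((measure_mono Set.diff_subset).trans_lt hQfin).ne)) hmaxD hptwise
  have h2 : ∫ x in Q \ E, max (A - f x) 0 ∂μ ≤ ∫ x in Q, max (A - f x) 0 ∂μ :=
    setIntegral_mono_set hmax
      (Filter.Eventually.of_forall fun x => le_max_right _ _)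
      (HasSubset.Subset.eventuallyLE Set.diff_subset)
  -- combine
  have hfinal : 2 * ((A - s) * (μ (Q \ E)).toReal) ≤ ε * A * (μ Q).toReal := by
    calc 2 * ((A - s) * (μ (Q \ E)).toReal)
        ≤ 2 * ∫ x in Q \ E, max (A - f x) 0 ∂μ := by linarith
      _ ≤ 2 * ∫ x in Q, max (A - f x) 0 ∂μ := by linarith
      _ = ∫ x in Q, |f x - A| ∂μ := hosc_int.symm
      _ ≤ ε * A * (μ Q).toReal := hGR'
  have hkey : (A - s) * l ≤ ε * A := by
    have h3 : 2 * ((A - s) * (l / 2 * (μ Q).toReal)) ≤ ε * A * (μ Q).toReal := by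
      nlinarith [hDbig, sub_pos.mpr hAs]
    nlinarith
  rw [div_mul_eq_mul_div, le_div_iff₀ hlε]
  nlinarith
end

section
/- Let μ be a positive measure on ℝ^n absolutely continuous with respect to Lebesgue measure, Q a cube with 0 < μ(Q) < ∞, and f a nonnegative μ-integrable function on Q satisfying Ω_μ(f; Q) ≤ ε·f_{Q,μ} for some 0 < ε < 2. Let ε < λ < 2 and let s ≥ 0 be any number such that μ{x ∈ Q : f(x) > s} < (1 − λ/2)·μ(Q). Then Ω_μ(f; Q) ≤ (ελ/(λ − ε))·s. -/
open MeasureTheory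

/-- Inequality (5) of Korenovskyy–Lerner–Stokolos: if `Ω_μ(f;Q) ≤ ε f_{Q,μ}` with
`0 < ε < 2`, `ε < λ < 2`, and `s ≥ 0` satisfies
`μ{x ∈ Q : f(x) > s} < (1 − λ/2) μ(Q)`, then `Ω_μ(f;Q) ≤ (ελ/(λ − ε)) s`. -/
theorem stmt8 {n : ℕ} (μ : Measure (Fin n → ℝ)) (hac : μ ≪ volume)
    (Q : Set (Fin n → ℝ)) (hQ : IsCube Q) (hQpos : 0 < μ Q) (hQfin : μ Q < ⊤)
    (f : (Fin n → ℝ) → ℝ) (hf0 : ∀ x ∈ Q, 0 ≤ f x) (hfint : IntegrableOn f Q μ)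
    (ε : ℝ) (hε0 : 0 < ε) (hε2 : ε < 2)
    (hGR : muOsc μ Q f ≤ ε * muAvg μ Q f)
    (l : ℝ) (hl1 : ε < l) (hl2 : l < 2)
    (s : ℝ) (hs : 0 ≤ s)
    (hμs : μ {x ∈ Q | f x > s} < ENNReal.ofReal (1 - l / 2) * μ Q) :
    muOsc μ Q f ≤ ε * l / (l - ε) * s := by
  obtain ⟨a, h, hh, hQeq⟩ := hQ
  have hQm : MeasurableSet Q := by rw [hQeq]; exact measurableSet_Icc
  set A := muAvg μ Q f with hAdef
  have hμQR : 0 < (μ Q).toReal := ENNReal.toReal_pos hQpos.ne' hQfin.ne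
  have hΩ : muOsc μ Q f = (∫ x in Q, |f x - A| ∂μ) / (μ Q).toReal := rfl
  have hInt_f : ∫ x in Q, f x ∂μ = A * (μ Q).toReal := by
    rw [hAdef, muAvg, div_mul_cancel₀ _ hμQR.ne']
  have hA0 : 0 ≤ A := by
    rw [hAdef, muAvg]
    exact div_nonneg (setIntegral_nonneg hQm hf0) ENNReal.toReal_nonneg
  clear_value A
  have hlε : 0 < l - ε := by linarith
  -- Case A ≤ s is easy
  rcases le_or_gt A s with hAs | hAs
  · have h2 : ε * A ≤ ε * l / (l - ε) * s := by
      rw [div_mul_eq_mul_div, le_div_iff₀ hlε]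
      nlinarith [mul_le_mul_of_nonneg_left hAs hε0.le,
        mul_nonneg (mul_nonneg hε0.le hs) hε0.le]
    linarith [hGR]
  -- Main case: A > s ≥ 0
  · obtain ⟨g, hgm, hfg⟩ := hfint.aestronglyMeasurable
    have hgmeas : Measurable g := hgm.measurable
    have hgint : IntegrableOn g Q μ := hfint.congr hfg
    set Eg : Set (Fin n → ℝ) := Q ∩ {x | s < g x} with hEgdef
    have hEgm : MeasurableSet Eg := hQm.inter (measurableSet_lt measurable_const hgmeas)
    have hne : μ ({x | f x ≠ g x} ∩ Q) = 0 := by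
      have h' := hfg
      rw [Filter.EventuallyEq, ae_iff] at h'
      rwa [Measure.restrict_apply' hQm] at h'
    have hEgle : μ Eg ≤ μ {x ∈ Q | f x > s} := by
      calc μ Eg ≤ μ ({x ∈ Q | f x > s} ∪ ({x | f x ≠ g x} ∩ Q)) := by
            apply measure_mono
            intro x hx
            by_cases hfgx : f x = g x
            · exact Or.inl ⟨hx.1, by rw [hfgx]; exact hx.2⟩
            · exact Or.inr ⟨hfgx, hx.1⟩
        _ ≤ μ {x ∈ Q | f x > s} + μ ({x | f x ≠ g x} ∩ Q) := measure_union_le _ _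
        _ = μ {x ∈ Q | f x > s} := by rw [hne, add_zero]
    have hEglt : μ Eg < ENNReal.ofReal (1 - l / 2) * μ Q := lt_of_le_of_lt hEgle hμs
    set Fg : Set (Fin n → ℝ) := Q \ Eg with hFgdef
    have hFgm : MeasurableSet Fg := hQm.diff hEgm
    have hEgQ : Eg ⊆ Q := Set.inter_subset_left
    have hEgfin : μ Eg ≠ ⊤ := (lt_of_le_of_lt (measure_mono hEgQ) hQfin).ne
    have hFgμ : μ Fg = μ Q - μ Eg := measure_diff hEgQ hEgm.nullMeasurableSet hEgfin
    -- real-valued measure estimates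
    have hEgR : (μ Eg).toReal < (1 - l / 2) * (μ Q).toReal := by
      have hfin2 : ENNReal.ofReal (1 - l / 2) * μ Q ≠ ⊤ :=
        ENNReal.mul_ne_top ENNReal.ofReal_ne_top hQfin.ne
      have h' := (ENNReal.toReal_lt_toReal hEgfin hfin2).mpr hEglt
      rwa [ENNReal.toReal_mul, ENNReal.toReal_ofReal (by linarith)] at h'
    have hFgR : (l / 2) * (μ Q).toReal < (μ Fg).toReal := by
      rw [hFgμ, ENNReal.toReal_sub_of_le (measure_mono hEgQ) hQfin.ne]
      linarith
    -- integral identities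
    have hInt_g : ∫ x in Q, g x ∂μ = A * (μ Q).toReal := by
      rw [← integral_congr_ae hfg, hInt_f]
    have hconst_int : IntegrableOn (fun _ => A) Q μ :=
      integrableOn_const hQfin.ne
    have hsub_int : IntegrableOn (fun x => A - g x) Q μ := hconst_int.sub hgint
    have hsub_int' : IntegrableOn (fun x => g x - A) Q μ := hgint.sub hconst_int
    have hm_int : IntegrableOn (fun x => max (A - g x) 0) Q μ := hsub_int.pos_part
    have hp_int : IntegrableOn (fun x => max (g x - A) 0) Q μ := hsub_int'.pos_part
    have hzero : ∫ x in Q, (g x - A) ∂μ = 0 := by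
      rw [integral_sub hgint hconst_int, setIntegral_const, measureReal_def, smul_eq_mul, hInt_g]
      ring
    have hpm : ∫ x in Q, max (g x - A) 0 ∂μ = ∫ x in Q, max (A - g x) 0 ∂μ := by
      have h1 : ∫ x in Q, (max (g x - A) 0 - max (A - g x) 0) ∂μ
          = ∫ x in Q, (g x - A) ∂μ := by
        apply integral_congr_ae
        filter_upwards with x
        try dsimp only
        rcases le_total (g x) A with h' | h'
        · rw [max_eq_right (by linarith : g x - A ≤ (0:ℝ)),
            max_eq_left (by linarith : (0:ℝ) ≤ A - g x)]
          ring
        · rw [max_eq_left (by linarith : (0:ℝ) ≤ g x - A),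
            max_eq_right (by linarith : A - g x ≤ (0:ℝ))]
          ring
      rw [integral_sub hp_int hm_int, hzero] at h1
      linarith
    have habs : ∫ x in Q, |g x - A| ∂μ = 2 * ∫ x in Q, max (A - g x) 0 ∂μ := by
      have h2 : ∫ x in Q, |g x - A| ∂μ =
          ∫ x in Q, (max (g x - A) 0 + max (A - g x) 0) ∂μ := by
        apply integral_congr_ae
        filter_upwards with x
        try dsimp only
        rcases le_total (g x) A with h' | h'
        · rw [abs_of_nonpos (by linarith), max_eq_right (by linarith : g x - A ≤ (0:ℝ)),
            max_eq_left (by linarith : (0:ℝ) ≤ A - g x)]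
          ring
        · rw [abs_of_nonneg (by linarith), max_eq_left (by linarith : (0:ℝ) ≤ g x - A),
            max_eq_right (by linarith : A - g x ≤ (0:ℝ))]
          ring
      rw [h2, integral_add hp_int hm_int, hpm]
      ring
    have hosc_eq : ∫ x in Q, |f x - A| ∂μ = ∫ x in Q, |g x - A| ∂μ :=
      integral_congr_ae (hfg.mono fun x hx => by dsimp only; rw [hx])
    -- lower bound on ∫ max (A - g) 0
    have hstep1 : (A - s) * (μ Fg).toReal ≤ ∫ x in Fg, max (A - g x) 0 ∂μ := by
      have hmono := setIntegral_mono_on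
        (integrableOn_const (C := A - s) ((lt_of_le_of_lt
          (measure_mono (Set.diff_subset : Fg ⊆ Q)) hQfin).ne))
        (hm_int.mono_set Set.diff_subset) hFgm
        (fun x hx => by
          have hgx : g x ≤ s := by
            by_contra h'
            exact hx.2 ⟨hx.1, lt_of_not_ge h'⟩
          exact le_max_of_le_left (by linarith : A - s ≤ A - g x))
      calc (A - s) * (μ Fg).toReal = ∫ _ in Fg, (A - s) ∂μ := by
            rw [setIntegral_const, measureReal_def, smul_eq_mul]; ring
        _ ≤ ∫ x in Fg, max (A - g x) 0 ∂μ := hmono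
    have hstep2 : ∫ x in Fg, max (A - g x) 0 ∂μ ≤ ∫ x in Q, max (A - g x) 0 ∂μ := by
      apply setIntegral_mono_set hm_int
      · filter_upwards with x using le_max_right _ _
      · exact Filter.Eventually.of_forall (fun x hx => hx.1)
    -- combine: lower bound on the oscillation integral
    have hlow : l * (A - s) * (μ Q).toReal ≤ ∫ x in Q, |f x - A| ∂μ := by
      rw [hosc_eq, habs]
      have h1 : (A - s) * (μ Fg).toReal ≤ ∫ x in Q, max (A - g x) 0 ∂μ :=
        le_trans hstep1 hstep2
      have h2 : (A - s) * ((l / 2) * (μ Q).toReal) ≤ (A - s) * (μ Fg).toReal :=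
        mul_le_mul_of_nonneg_left hFgR.le (by linarith)
      nlinarith
    have hΩlow : l * (A - s) ≤ muOsc μ Q f := by
      rw [hΩ, le_div_iff₀ hμQR]
      exact hlow
    -- conclude
    have hAle : (l - ε) * A ≤ l * s := by nlinarith [hGR, hΩlow]
    have h3 : ε * A ≤ ε * l / (l - ε) * s := by
      rw [div_mul_eq_mul_div, le_div_iff₀ hlε]
      nlinarith [mul_le_mul_of_nonneg_left hAle hε0.le]
    linarith [hGR]
end

section
/- For every dimension n ≥ 1 there exists a constant B(n) > 0 with the following property (covering lemma). Let μ be a positive measure on ℝ^n absolutely continuous with respect to Lebesgue measure, Q_0 a cube with 0 < μ(Q_0) < ∞, E a measurable subset of Q_0, and 0 < ρ < 1 with μ(E) ≤ ρ·μ(Q_0). Then there exists a (finite or countable) family {Q_i} of cubes contained in Q_0 such that: (i) μ(Q_i ∩ E) = ρ·μ(Q_i) for every i; (ii) the family is almost disjoint with constant B(n), i.e. every point of Q_0 belongs to at most B(n) of the cubes Q_i; (iii) μ-almost every point of E belongs to ∪_i Q_i. -/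
open MeasureTheory

open Set Metric Filter
open scoped ENNReal Topology

namespace MMNO

variable {n : ℕ}

variable {n : ℕ}

/-- lower corner of the clamped cube of side `s` around `x` inside `Icc a (a+h)` -/
noncomputable def cc (a : Fin n → ℝ) (h : ℝ) (x : Fin n → ℝ) (s : ℝ) : Fin n → ℝ :=
  fun i => max (a i) (min (x i - s / 2) (a i + h - s))

/-- the clamped cube -/
noncomputable def cube (a : Fin n → ℝ) (h : ℝ) (x : Fin n → ℝ) (s : ℝ) : Set (Fin n → ℝ) :=
  Set.Icc (cc a h x s) (fun i => cc a h x s i + s)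

variable {a x y : Fin n → ℝ} {h s : ℝ}

lemma cc_continuous (a : Fin n → ℝ) (h : ℝ) (x : Fin n → ℝ) (i : Fin n) :
    Continuous fun s => cc a h x s i := by
  unfold cc; fun_prop

lemma cube_isCube (hs : 0 < s) : IsCube (cube a h x s) := ⟨cc a h x s, s, hs, rfl⟩

lemma cube_measurable : MeasurableSet (cube a h x s) := measurableSet_Icc

lemma cube_subset_Q0 (hs : 0 ≤ s) (hsh : s ≤ h) :
    cube a h x s ⊆ Icc a (fun i => a i + h) := by
  intro y hy
  constructor
  · intro i
    exact le_trans (le_max_left _ _) (hy.1 i)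
  · intro i
    have h1 : cc a h x s i ≤ a i + h - s :=
      max_le (by linarith) (min_le_right _ _)
    have := hy.2 i
    dsimp at this ⊢
    linarith

lemma mem_cube_self (hx : x ∈ Icc a (fun i => a i + h)) (hs : 0 ≤ s) :
    x ∈ cube a h x s := by
  constructor
  · intro i
    have h1 := hx.1 i
    have h2 := hx.2 i
    exact max_le h1 (le_trans (min_le_left _ _) (by linarith))
  · intro i
    have h1 := hx.1 i
    have h2 := hx.2 i
    dsimp
    have hmin : x i - s ≤ min (x i - s / 2) (a i + h - s) :=
      le_min (by linarith) (by dsimp at h2; linarith)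
    have := le_max_right (a i) (min (x i - s / 2) (a i + h - s))
    unfold cc
    linarith

lemma closedBall_inter_subset_cube (hs : 0 ≤ s) :
    closedBall x (s / 2) ∩ Icc a (fun i => a i + h) ⊆ cube a h x s := by
  rintro y ⟨hb, hy⟩
  have hco : ∀ i, |y i - x i| ≤ s / 2 := by
    intro i
    have := (dist_pi_le_iff (by linarith)).1 (mem_closedBall.1 hb) i
    rwa [Real.dist_eq] at this
  constructor
  · intro i
    have h1 := hy.1 i
    have h2 := abs_le.1 (hco i)
    exact max_le h1 (le_trans (min_le_left _ _) (by linarith))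
  · intro i
    have h1 := hy.2 i
    have h2 := abs_le.1 (hco i)
    dsimp at h1 ⊢
    have hmin : y i - s ≤ min (x i - s / 2) (a i + h - s) :=
      le_min (by linarith) (by linarith)
    have := le_max_right (a i) (min (x i - s / 2) (a i + h - s))
    unfold cc
    linarith

lemma cc_at_h (hh : 0 < h) (hx : x ∈ Icc a (fun i => a i + h)) :
    cc a h x h = a := by
  funext i
  unfold cc
  have : min (x i - h / 2) (a i + h - h) ≤ a i := le_trans (min_le_right _ _) (by linarith)
  exact max_eq_left this

lemma cube_at_h (hh : 0 < h) (hx : x ∈ Icc a (fun i => a i + h)) :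
    cube a h x h = Icc a (fun i => a i + h) := by
  unfold cube
  rw [cc_at_h hh hx]

lemma closedBall_eq_Icc' {r : ℝ} (hr : 0 ≤ r) :
    closedBall x r = Icc (fun i => x i - r) (fun i => x i + r) := by
  rw [closedBall_pi x hr]
  simp only [Real.closedBall_eq_Icc]
  exact Set.pi_univ_Icc _ _

lemma cube_eq_closedBall {r : ℝ} (hr : 0 < r) (h1 : ∀ i, a i ≤ x i - r)
    (h2 : ∀ i, x i + r ≤ a i + h) :
    cube a h x (2 * r) = closedBall x r := by
  have hcc : cc a h x (2 * r) = fun i => x i - r := by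
    funext i
    unfold cc
    have e1 : x i - 2 * r / 2 = x i - r := by ring
    rw [e1]
    rw [min_eq_left (by linarith [h2 i]), max_eq_right (h1 i)]
  unfold cube
  rw [hcc, closedBall_eq_Icc' hr.le]
  rw [show (fun i => (fun i => x i - r) i + 2 * r) = fun i => x i + r from funext fun i => by dsimp; ring]

lemma cc_add_eq (a : Fin n → ℝ) (h : ℝ) (x : Fin n → ℝ) (s : ℝ) (i : Fin n) :
    cc a h x s i + s = max (a i + s) (min (x i + s / 2) (a i + h)) := by
  unfold cc
  rw [← max_add_add_right, ← min_add_add_right]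
  congr 2 <;> ring

lemma cube_mono {s' : ℝ} (hss' : s ≤ s') : cube a h x s ⊆ cube a h x s' := by
  intro y hy
  constructor
  · intro i
    refine le_trans ?_ (hy.1 i)
    exact max_le_max le_rfl (min_le_min (by linarith) (by linarith))
  · intro i
    have := hy.2 i
    dsimp at this ⊢
    rw [cc_add_eq] at this ⊢
    refine le_trans this ?_
    exact max_le_max (by linarith) (min_le_min (by linarith) le_rfl)


/-- signature of `y` relative to cube data -/
noncomputable def sg (t sh : ℝ) : Fin 3 :=
  if sh / 2 < t then 2 else if t < -(sh / 2) then 1 else 0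

lemma sg_eq_two_iff {t sh : ℝ} : sg t sh = 2 ↔ sh / 2 < t := by
  unfold sg; split_ifs <;> simp_all

lemma sg_eq_one_iff {t sh : ℝ} : sg t sh = 1 ↔ (¬ sh / 2 < t) ∧ t < -(sh / 2) := by
  unfold sg; split_ifs <;> simp_all

lemma sg_eq_zero_iff {t sh : ℝ} : sg t sh = 0 ↔ (¬ sh / 2 < t) ∧ ¬ t < -(sh / 2) := by
  unfold sg; split_ifs <;> simp_all

/-- if `y` sits in the cube beyond the right half at coordinate `i`, the cube is
left-clamped there -/
lemma left_clamp (i : Fin n)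
    (hy2 : y i ≤ cc a h x s i + s) (ht : s / 2 < y i - x i) :
    x i - a i < s / 2 ∧ y i ≤ a i + s := by
  have hgt : x i - s / 2 < cc a h x s i := by linarith
  have hcase := max_choice (a i) (min (x i - s / 2) (a i + h - s))
  have hmin : min (x i - s / 2) (a i + h - s) ≤ x i - s / 2 := min_le_left _ _
  have hccdef : cc a h x s i = max (a i) (min (x i - s / 2) (a i + h - s)) := rfl
  have hcc : cc a h x s i = a i := by
    rcases hcase with hc | hc
    · rw [hccdef, hc]
    · exfalso; rw [hccdef, hc] at hgt; linarith
  rw [hcc] at hy2 hgt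
  constructor <;> linarith

/-- symmetric right-clamp -/
lemma right_clamp (i : Fin n) (hsh : s ≤ h)
    (hy1 : cc a h x s i ≤ y i) (ht : y i - x i < -(s / 2)) :
    a i + h - x i < s / 2 ∧ a i + h - s ≤ y i := by
  have hlt : cc a h x s i < x i - s / 2 := by linarith
  have hmin : min (x i - s / 2) (a i + h - s) = a i + h - s := by
    rcases min_choice (x i - s / 2) (a i + h - s) with hc | hc
    · exfalso
      have : x i - s / 2 ≤ cc a h x s i := by
        unfold cc; rw [hc]; exact le_max_right _ _
      linarith
    · exact hc
  have hcc : cc a h x s i = a i + h - s := by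
    unfold cc; rw [hmin]
    exact max_eq_right (by linarith)
  rw [hcc] at hlt hy1
  constructor <;> linarith

/-- the key contradiction: two cubes of the same signature at `y` whose centered
balls are disjoint in coordinate `i` cannot both contain `y`. -/
lemma sig_contradiction {xp xq : Fin n → ℝ} {sp sq : ℝ}
    (hxp : xp ∈ Icc a (fun i => a i + h)) (hxq : xq ∈ Icc a (fun i => a i + h))
    (hsp : 0 < sp) (hsph : sp ≤ h) (hsq : 0 < sq) (hsqh : sq ≤ h)
    (i : Fin n)
    (hyp1 : cc a h xp sp i ≤ y i) (hyp2 : y i ≤ cc a h xp sp i + sp)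
    (hyq1 : cc a h xq sq i ≤ y i) (hyq2 : y i ≤ cc a h xq sq i + sq)
    (hsep : sp / 2 + sq / 2 < |xp i - xq i|)
    (hsig : sg (y i - xp i) sp = sg (y i - xq i) sq) : False := by
  have hap := hxp.1 i
  have hbp := hxp.2 i
  have haq := hxq.1 i
  have hbq := hxq.2 i
  dsimp at hbp hbq
  by_cases h2p : sp / 2 < y i - xp i
  · have h2q : sq / 2 < y i - xq i := by
      have : sg (y i - xq i) sq = 2 := by rw [← hsig, sg_eq_two_iff.2 h2p]
      exact sg_eq_two_iff.1 this
    obtain ⟨hp1, hp2⟩ := left_clamp (a := a) (h := h) i hyp2 h2p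
    obtain ⟨hq1, hq2⟩ := left_clamp (a := a) (h := h) i hyq2 h2q
    have : |xp i - xq i| < sp / 2 + sq / 2 := by
      rw [abs_sub_lt_iff]; constructor <;> linarith
    linarith
  · by_cases h1p : y i - xp i < -(sp / 2)
    · have h1q : y i - xq i < -(sq / 2) ∧ ¬ sq / 2 < y i - xq i := by
        have : sg (y i - xq i) sq = 1 := by rw [← hsig, sg_eq_one_iff.2 ⟨h2p, h1p⟩]
        have := sg_eq_one_iff.1 this
        exact ⟨this.2, this.1⟩
      obtain ⟨hp1, hp2⟩ := right_clamp (a := a) (h := h) i hsph hyp1 h1p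
      obtain ⟨hq1, hq2⟩ := right_clamp (a := a) (h := h) i hsqh hyq1 h1q.1
      have : |xp i - xq i| < sp / 2 + sq / 2 := by
        rw [abs_sub_lt_iff]; constructor <;> linarith
      linarith
    · have h0q : (¬ sq / 2 < y i - xq i) ∧ ¬ y i - xq i < -(sq / 2) := by
        have : sg (y i - xq i) sq = 0 := by rw [← hsig, sg_eq_zero_iff.2 ⟨h2p, h1p⟩]
        exact sg_eq_zero_iff.1 this
      push_neg at h2p h1p
      obtain ⟨h2q, h1q⟩ := h0q
      push_neg at h2q h1q
      have : |xp i - xq i| ≤ sp / 2 + sq / 2 := by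
        rw [abs_sub_le_iff]; constructor <;> linarith
      linarith

/-- disjoint closed sup-balls are separated in some coordinate -/
lemma exists_coord_sep {p q : Fin n → ℝ} {rp rq : ℝ} (hrp : 0 ≤ rp) (hrq : 0 ≤ rq)
    (hd : Disjoint (closedBall p rp) (closedBall q rq)) :
    ∃ i, rp + rq < |p i - q i| := by
  by_contra hcon
  push_neg at hcon
  rcases eq_or_lt_of_le (add_nonneg hrp hrq) with h0 | hpos
  · have hrp0 : rp = 0 := by linarith
    have hrq0 : rq = 0 := by linarith
    have : p = q := by
      funext i
      have h1 := hcon i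
      have h2 : p i - q i = 0 := abs_nonpos_iff.1 (by linarith)
      linarith
    rw [this] at hd
    exact Set.disjoint_left.1 hd (mem_closedBall_self hrp) (mem_closedBall_self hrq)
  · set z : Fin n → ℝ := fun i => (rq * p i + rp * q i) / (rp + rq) with hz
    have hzp : z ∈ closedBall p rp := by
      rw [mem_closedBall]
      refine (dist_pi_le_iff hrp).2 fun i => ?_
      rw [Real.dist_eq]
      have he : z i - p i = rp * (q i - p i) / (rp + rq) := by
        rw [hz]; field_simp; ring
      rw [show |z i - p i| = |rp * (q i - p i) / (rp + rq)| from by rw [he]]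
      rw [abs_div, abs_mul, abs_of_nonneg hrp, abs_of_pos hpos]
      rw [div_le_iff₀ hpos]
      have : |q i - p i| ≤ rp + rq := by rw [abs_sub_comm]; exact hcon i
      nlinarith
    have hzq : z ∈ closedBall q rq := by
      rw [mem_closedBall]
      refine (dist_pi_le_iff hrq).2 fun i => ?_
      rw [Real.dist_eq]
      have he : z i - q i = rq * (p i - q i) / (rp + rq) := by
        rw [hz]; field_simp; ring
      rw [show |z i - q i| = |rq * (p i - q i) / (rp + rq)| from by rw [he]]
      rw [abs_div, abs_mul, abs_of_nonneg hrq, abs_of_pos hpos]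
      rw [div_le_iff₀ hpos]
      have : |p i - q i| ≤ rp + rq := hcon i
      nlinarith
    exact Set.disjoint_left.1 hd hzp hzq


/-- the inner open box is almost all of the cube (Lebesgue) -/
lemma cube_diff_inner_null (a : Fin n → ℝ) (h : ℝ) (x : Fin n → ℝ) (s : ℝ) :
    volume (cube a h x s \
      univ.pi fun i => Ioo (cc a h x s i) (cc a h x s i + s)) = 0 := by
  have hsub : (univ.pi fun i => Ioo (cc a h x s i) (cc a h x s i + s)) ⊆ cube a h x s := by
    rw [cube, ← Set.pi_univ_Icc]
    exact Set.pi_mono fun i _ => Ioo_subset_Icc_self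
  have hIoo : volume (univ.pi fun i => Ioo (cc a h x s i) (cc a h x s i + s))
      = ∏ _i : Fin n, ENNReal.ofReal s := by
    rw [@Real.volume_pi_Ioo (Fin n) _ (fun i => cc a h x s i) (fun i => cc a h x s i + s)]
    congr 1
    funext i
    congr 1
    ring
  have hIcc : volume (cube a h x s) = ∏ _i : Fin n, ENNReal.ofReal s := by
    rw [cube, @Real.volume_Icc_pi (Fin n) _ (cc a h x s) (fun i => cc a h x s i + s)]
    congr 1
    funext i
    congr 1
    ring
  rw [measure_diff hsub (MeasurableSet.univ_pi fun i => measurableSet_Ioo).nullMeasurableSet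
    (by rw [hIoo]; exact (ENNReal.prod_lt_top (fun i _ => ENNReal.ofReal_lt_top)).ne),
    hIoo, hIcc, tsub_self]

lemma measure_cube_continuousAt (ν : Measure (Fin n → ℝ)) [IsFiniteMeasure ν]
    (hν : ν ≪ volume) (a : Fin n → ℝ) (h : ℝ) (x : Fin n → ℝ) (s₀ : ℝ) :
    ContinuousAt (fun s => (ν (cube a h x s)).toReal) s₀ := by
  have hnull : ν (cube a h x s₀ \
      univ.pi fun i => Ioo (cc a h x s₀ i) (cc a h x s₀ i + s₀)) = 0 :=
    hν (cube_diff_inner_null a h x s₀)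
  have henn : Tendsto (fun s => ν (cube a h x s)) (𝓝 s₀) (𝓝 (ν (cube a h x s₀))) := by
    refine tendsto_iff_seq_tendsto.2 fun u hu => ?_
    have heq : ∀ s : ℝ, ν (cube a h x s)
        = ∫⁻ z, (cube a h x s).indicator (fun _ => (1 : ℝ≥0∞)) z ∂ν := by
      intro s
      have hm : MeasurableSet (cube a h x s) := measurableSet_Icc
      rw [lintegral_indicator_const hm, one_mul]
    simp only [heq]
    refine tendsto_lintegral_of_dominated_convergence (fun _ => (1 : ℝ≥0∞))
      (fun k => (measurable_const.indicator measurableSet_Icc)) ?_ ?_ ?_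
    · intro k
      refine ae_of_all _ fun z => ?_
      classical
      by_cases hz : z ∈ cube a h x (u k) <;> simp [Set.indicator, hz]
    · simp [lintegral_const, measure_ne_top ν univ]
    · -- a.e. pointwise convergence of indicators
      refine ae_iff.2 (measure_mono_null ?_ hnull)
      intro z hz
      simp only [mem_setOf_eq] at hz
      by_contra hzc
      apply hz
      have hcases : z ∈ (univ.pi fun i => Ioo (cc a h x s₀ i) (cc a h x s₀ i + s₀))
          ∨ z ∉ cube a h x s₀ := by
        by_cases h1 : z ∈ cube a h x s₀
        · left
          by_contra h2
          exact hzc ⟨h1, h2⟩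
        · right; exact h1
      have hcc_tendsto : ∀ i, Tendsto (fun k => cc a h x (u k) i) atTop
          (𝓝 (cc a h x s₀ i)) := fun i => ((cc_continuous a h x i).tendsto s₀).comp hu
      have hup_tendsto : ∀ i, Tendsto (fun k => cc a h x (u k) i + u k) atTop
          (𝓝 (cc a h x s₀ i + s₀)) := fun i => ((hcc_tendsto i).add hu)
      rcases hcases with hin | hout
      · have hev : ∀ᶠ k in atTop, z ∈ cube a h x (u k) := by
          have hall : ∀ᶠ k in atTop, ∀ i,
              cc a h x (u k) i < z i ∧ z i < cc a h x (u k) i + u k := by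
            rw [eventually_all]
            intro i
            have hi := hin i (mem_univ i)
            exact ((hcc_tendsto i).eventually_lt_const hi.1).and
              ((hup_tendsto i).eventually_const_lt hi.2)
          filter_upwards [hall] with k hk
          exact ⟨fun i => (hk i).1.le, fun i => (hk i).2.le⟩
        have hz0 : z ∈ cube a h x s₀ :=
          ⟨fun i => (hin i (mem_univ i)).1.le, fun i => (hin i (mem_univ i)).2.le⟩
        refine Tendsto.congr' ?_ tendsto_const_nhds
        filter_upwards [hev] with k hk
        simp [Set.indicator_of_mem hk, Set.indicator_of_mem hz0]
      · have : ¬ (∀ i, cc a h x s₀ i ≤ z i) ∨ ¬ (∀ i, z i ≤ cc a h x s₀ i + s₀) := by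
          by_contra hcon
          push_neg at hcon
          exact hout ⟨fun i => hcon.1 i, fun i => hcon.2 i⟩
        have hev : ∀ᶠ k in atTop, z ∉ cube a h x (u k) := by
          rcases this with hlow | hhigh
          · push_neg at hlow
            obtain ⟨i, hi⟩ := hlow
            filter_upwards [(hcc_tendsto i).eventually_const_lt hi] with k hk
            intro hmem
            exact absurd (hmem.1 i) (not_le.2 hk)
          · push_neg at hhigh
            obtain ⟨i, hi⟩ := hhigh
            filter_upwards [(hup_tendsto i).eventually_lt_const hi] with k hk
            intro hmem
            exact absurd (hmem.2 i) (not_le.2 hk)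
        refine Tendsto.congr' ?_ tendsto_const_nhds
        filter_upwards [hev] with k hk
        simp [Set.indicator_of_notMem hk, Set.indicator_of_notMem hout]
  exact (ENNReal.tendsto_toReal (measure_ne_top ν _)).comp henn

lemma exists_good_cube (hn : Nonempty (Fin n)) (ν : Measure (Fin n → ℝ)) [IsFiniteMeasure ν]
    (hν : ν ≪ volume) {a x : Fin n → ℝ} {h ρ : ℝ} {E : Set (Fin n → ℝ)}
    (hh : 0 < h) (hE : MeasurableSet E) (hEQ : E ⊆ Icc a (fun i => a i + h))
    (hx : x ∈ Icc a (fun i => a i + h)) (hxi : ∀ i, a i < x i ∧ x i < a i + h)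
    (hρ0 : 0 < ρ) (hρ1 : ρ < 1)
    (hglob : ν E ≤ ENNReal.ofReal ρ * ν (Icc a (fun i => a i + h)))
    (hden : Tendsto (fun r => ν (E ∩ closedBall x r) / ν (closedBall x r))
      (𝓝[>] (0:ℝ)) (𝓝 1)) :
    ∃ s, 0 < s ∧ s ≤ h ∧
      ν (E ∩ cube a h x s) = ENNReal.ofReal ρ * ν (cube a h x s) := by
  classical
  -- a margin to the boundary
  set δ : ℝ := Finset.univ.inf' (Finset.univ_nonempty (α := Fin n))
      (fun i => min (x i - a i) (a i + h - x i)) with hδ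
  have hδpos : 0 < δ := by
    rw [hδ, Finset.lt_inf'_iff]
    intro i _
    exact lt_min (by linarith [(hxi i).1]) (by linarith [(hxi i).2])
  -- find a small radius with density ratio above ρ
  have hρlt : (ENNReal.ofReal ρ) < 1 := ENNReal.ofReal_lt_one.2 hρ1
  have h1 : ∀ᶠ r in 𝓝[>] (0:ℝ),
      ENNReal.ofReal ρ < ν (E ∩ closedBall x r) / ν (closedBall x r) :=
    hden.eventually_const_lt hρlt
  have h2 : Ioo (0:ℝ) (min δ (h/2)) ∈ 𝓝[>] (0:ℝ) :=
    Ioo_mem_nhdsGT_of_mem ⟨le_rfl, by positivity⟩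
  obtain ⟨r, hr1, hr2⟩ := (h1.and (eventually_of_mem h2 fun r hr => hr)).exists
  obtain ⟨hr0, hrlt⟩ := hr2
  have hrδ : r < δ := lt_of_lt_of_le hrlt (min_le_left _ _)
  have hrh : r < h / 2 := lt_of_lt_of_le hrlt (min_le_right _ _)
  have hball : cube a h x (2 * r) = closedBall x r := by
    refine cube_eq_closedBall hr0 (fun i => ?_) (fun i => ?_)
    · have : δ ≤ x i - a i :=
        le_trans (Finset.inf'_le _ (Finset.mem_univ i)) (min_le_left _ _)
      linarith
    · have : δ ≤ a i + h - x i :=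
        le_trans (Finset.inf'_le _ (Finset.mem_univ i)) (min_le_right _ _)
      linarith
  -- the strict inequality at scale 2r
  have hstrict : ENNReal.ofReal ρ * ν (closedBall x r) < ν (E ∩ closedBall x r) := by
    have hB0 : ν (closedBall x r) ≠ 0 := by
      intro h0
      have : ν (E ∩ closedBall x r) = 0 :=
        le_antisymm (le_trans (measure_mono inter_subset_right) h0.le) zero_le
      rw [this, h0] at hr1
      simp at hr1
    exact ENNReal.mul_lt_of_lt_div hr1
  -- the function for the IVT
  set νE : Measure (Fin n → ℝ) := ν.restrict E with hνE
  haveI : IsFiniteMeasure νE := by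
    constructor
    rw [hνE, Measure.restrict_apply_univ]
    exact measure_lt_top ν E
  have hνEvol : νE ≪ volume :=
    (Measure.absolutelyContinuous_of_le Measure.restrict_le_self).trans hν
  have hrestr : ∀ s : ℝ, νE (cube a h x s) = ν (E ∩ cube a h x s) := by
    intro s
    have hm : MeasurableSet (cube a h x s) := by unfold cube; exact measurableSet_Icc
    rw [hνE, Measure.restrict_apply hm, inter_comm]
  set f : ℝ → ℝ := fun s => ρ * (ν (cube a h x s)).toReal - (νE (cube a h x s)).toReal
    with hf
  have hcont : ContinuousOn f (Icc (2 * r) h) := by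
    intro s hs
    have hca : ContinuousAt f s := by
      rw [hf]
      exact ContinuousAt.sub
        (continuousAt_const.mul (measure_cube_continuousAt ν hν a h x s))
        (measure_cube_continuousAt νE hνEvol a h x s)
    exact hca.continuousWithinAt
  have hf1 : f (2 * r) < 0 := by
    rw [hf]
    dsimp only
    rw [hrestr, hball]
    have hlt := hstrict
    have h3 : (ENNReal.ofReal ρ * ν (closedBall x r)).toReal
        < (ν (E ∩ closedBall x r)).toReal := by
      refine ENNReal.toReal_strict_mono (measure_ne_top ν _) hlt
    rw [ENNReal.toReal_mul, ENNReal.toReal_ofReal hρ0.le] at h3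
    linarith
  have hf2 : 0 ≤ f h := by
    rw [hf]
    dsimp only
    rw [hrestr, cube_at_h hh hx, inter_eq_left.2 hEQ]
    have h3 : (ν E).toReal ≤ (ENNReal.ofReal ρ * ν (Icc a (fun i => a i + h))).toReal :=
      ENNReal.toReal_mono (by
        exact ENNReal.mul_ne_top ENNReal.ofReal_ne_top (measure_ne_top ν _)) hglob
    rw [ENNReal.toReal_mul, ENNReal.toReal_ofReal hρ0.le] at h3
    linarith
  have h2rh : 2 * r ≤ h := by linarith
  have hivt : (0:ℝ) ∈ f '' Icc (2*r) h := by
    apply intermediate_value_Icc h2rh hcont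
    exact ⟨hf1.le, hf2⟩
  obtain ⟨s, hsmem, hfs⟩ := hivt
  refine ⟨s, by linarith [hsmem.1], hsmem.2, ?_⟩
  have heq : (ν (E ∩ cube a h x s)).toReal = ρ * (ν (cube a h x s)).toReal := by
    rw [hf] at hfs
    dsimp only at hfs
    rw [hrestr] at hfs
    linarith
  calc ν (E ∩ cube a h x s) = ENNReal.ofReal ((ν (E ∩ cube a h x s)).toReal) :=
        (ENNReal.ofReal_toReal (measure_ne_top ν _)).symm
    _ = ENNReal.ofReal (ρ * (ν (cube a h x s)).toReal) := by rw [heq]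
    _ = ENNReal.ofReal ρ * ENNReal.ofReal ((ν (cube a h x s)).toReal) :=
        ENNReal.ofReal_mul hρ0.le
    _ = ENNReal.ofReal ρ * ν (cube a h x s) := by
        rw [ENNReal.ofReal_toReal (measure_ne_top ν _)]


end MMNO

open MMNO

/-- The Covering Lemma (Mateu–Mattila–Nicolau–Orobitg): for every dimension `n ≥ 1`
there is `B(n) > 0` such that for any measure `μ ≪ volume`, any cube `Q₀` with
`0 < μ(Q₀) < ∞`, any measurable `E ⊆ Q₀` and `0 < ρ < 1` with `μ(E) ≤ ρ μ(Q₀)`,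
there is a countable family of cubes `Qᵢ ⊆ Q₀` with `μ(Qᵢ ∩ E) = ρ μ(Qᵢ)`, each
point of `Q₀` lying in at most `B(n)` of the cubes, and `μ`-almost every point of
`E` lying in `⋃ᵢ Qᵢ`. -/
theorem stmt10 :
    ∀ n : ℕ, 1 ≤ n → ∃ B : ℕ, 0 < B ∧
      ∀ (μ : Measure (Fin n → ℝ)), μ ≪ volume →
      ∀ Q₀ : Set (Fin n → ℝ), IsCube Q₀ → 0 < μ Q₀ → μ Q₀ < ⊤ →
      ∀ E : Set (Fin n → ℝ), MeasurableSet E → E ⊆ Q₀ →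
      ∀ ρ : ℝ, 0 < ρ → ρ < 1 → μ E ≤ ENNReal.ofReal ρ * μ Q₀ →
      ∃ (ι : Type) (_ : Countable ι) (Qi : ι → Set (Fin n → ℝ)),
        (∀ i, IsCube (Qi i) ∧ Qi i ⊆ Q₀) ∧
        (∀ i, μ (Qi i ∩ E) = ENNReal.ofReal ρ * μ (Qi i)) ∧
        (∀ x ∈ Q₀, {i | x ∈ Qi i}.encard ≤ (B : ℕ∞)) ∧
        μ (E \ ⋃ i, Qi i) = 0 := by
  intro n hn
  obtain ⟨N, τ, hτ, hN⟩ := HasBesicovitchCovering.no_satelliteConfig (α := Fin n → ℝ)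
  refine ⟨N * 3 ^ n + 1, Nat.succ_pos _, ?_⟩
  intro μ hμ Q₀ hQ₀ hpos hfin E hEmeas hEQ ρ hρ0 hρ1 hEρ
  classical
  obtain ⟨a, h, hh, rfl⟩ := hQ₀
  have hQ0m : MeasurableSet (Icc a (fun i => a i + h)) := measurableSet_Icc
  set ν := μ.restrict (Icc a (fun i => a i + h)) with hνdef
  haveI : IsFiniteMeasure ν := by
    constructor
    rw [hνdef, Measure.restrict_apply_univ]
    exact hfin
  have hνvol : ν ≪ volume :=
    (Measure.absolutelyContinuous_of_le Measure.restrict_le_self).trans hμ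
  have hνapp : ∀ t, ν t = μ (t ∩ Icc a (fun i => a i + h)) := fun t => by
    rw [hνdef, Measure.restrict_apply' hQ0m]
  have hνE : ν E = μ E := by rw [hνapp, inter_eq_left.2 hEQ]
  have hνQ : ν (Icc a fun i => a i + h) = μ (Icc a fun i => a i + h) := by
    rw [hνapp, inter_self]
  have hglob : ν E ≤ ENNReal.ofReal ρ * ν (Icc a fun i => a i + h) := by
    rw [hνE, hνQ]; exact hEρ
  have hdenae := Besicovitch.ae_tendsto_measure_inter_div ν E
  set S : Set (Fin n → ℝ) := univ.pi (fun i => Ioo (a i) (a i + h)) with hS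
  set A : Set (Fin n → ℝ) := {x | x ∈ E ∧ x ∈ S ∧
    Tendsto (fun r => ν (E ∩ closedBall x r) / ν (closedBall x r))
      (𝓝[>] (0:ℝ)) (𝓝 1)} with hA
  have hAE : A ⊆ E := fun z hz => hz.1
  have hAQ : A ⊆ Icc a (fun i => a i + h) := fun z hz => hEQ hz.1
  have hnempty : Nonempty (Fin n) := ⟨⟨0, hn⟩⟩
  have key : ∀ b : ↥A, ∃ s, 0 < s ∧ s ≤ h ∧
      ν (E ∩ cube a h (b : Fin n → ℝ) s)
        = ENNReal.ofReal ρ * ν (cube a h (b : Fin n → ℝ) s) := by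
    rintro ⟨z, hz⟩
    refine exists_good_cube hnempty ν hνvol hh hEmeas hEQ (hEQ hz.1) ?_ hρ0 hρ1 hglob hz.2.2
    intro i
    have := hz.2.1 i (mem_univ i)
    exact ⟨this.1, this.2⟩
  choose sfun hs0 hsh hseq using key
  set pkg : Besicovitch.BallPackage ↥A (Fin n → ℝ) :=
    { c := fun b => (b : Fin n → ℝ), r := fun b => sfun b / 2,
      rpos := fun b => by linarith [hs0 b],
      r_bound := h, r_le := fun b => by linarith [hs0 b, hsh b] } with hpkg
  obtain ⟨fam, hfdisj, hfcov⟩ := Besicovitch.exist_disjoint_covering_families hτ hN pkg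
  have hfcnt : ∀ i : Fin N, (fam i).Countable := by
    intro i
    apply (hfdisj i).countable_of_nonempty_interior
    intro j _
    refine ⟨(j : Fin n → ℝ),
      interior_maximal ball_subset_closedBall isOpen_ball (mem_ball_self ?_)⟩
    have e : pkg.r j = sfun j / 2 := rfl
    rw [e]
    linarith [hs0 j]
  set C : Set (Fin N × ↥A) := {p | p.2 ∈ fam p.1} with hC
  have hCcnt : C.Countable := by
    have hsub : C ⊆ ⋃ i : Fin N, (fun b => (i, b)) '' fam i := by
      rintro ⟨i, b⟩ hp
      exact mem_iUnion.2 ⟨i, ⟨b, hp, rfl⟩⟩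
    exact (Set.countable_iUnion fun i => (hfcnt i).image _).mono hsub
  haveI hCc : Countable ↥C := hCcnt.to_subtype
  refine ⟨↥C, inferInstance,
    fun p => cube a h ((p : Fin N × ↥A).2 : Fin n → ℝ) (sfun (p : Fin N × ↥A).2),
    ?_, ?_, ?_, ?_⟩
  · -- cubes inside Q₀
    intro p
    exact ⟨cube_isCube (hs0 _), cube_subset_Q0 (hs0 _).le (hsh _)⟩
  · -- exact ratio
    intro p
    have hratio := hseq (p : Fin N × ↥A).2
    have hsub : cube a h ((p : Fin N × ↥A).2 : Fin n → ℝ) (sfun (p : Fin N × ↥A).2)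
        ⊆ Icc a (fun i => a i + h) := cube_subset_Q0 (hs0 _).le (hsh _)
    have h1 : ν (E ∩ cube a h ((p : Fin N × ↥A).2 : Fin n → ℝ) (sfun (p : Fin N × ↥A).2))
        = μ (cube a h ((p : Fin N × ↥A).2 : Fin n → ℝ) (sfun (p : Fin N × ↥A).2) ∩ E) := by
      rw [hνapp, inter_eq_left.2 (inter_subset_left.trans hEQ), inter_comm]
    have h2 : ν (cube a h ((p : Fin N × ↥A).2 : Fin n → ℝ) (sfun (p : Fin N × ↥A).2))
        = μ (cube a h ((p : Fin N × ↥A).2 : Fin n → ℝ) (sfun (p : Fin N × ↥A).2)) := by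
      rw [hνapp, inter_eq_left.2 hsub]
    rw [h1, h2] at hratio
    exact hratio
  · -- bounded overlap
    intro y hy
    set F : ↥C → Fin N × (Fin n → Fin 3) := fun p =>
      ((p : Fin N × ↥A).1,
        fun i => sg (y i - ((p : Fin N × ↥A).2 : Fin n → ℝ) i) (sfun (p : Fin N × ↥A).2))
      with hF
    set T : Set ↥C :=
      {p : ↥C | y ∈ cube a h ((p : Fin N × ↥A).2 : Fin n → ℝ) (sfun (p : Fin N × ↥A).2)}
      with hT
    have hinj : Set.InjOn F T := by
      rintro p hp q hq hFeq
      rw [hF, Prod.mk.injEq] at hFeq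
      obtain ⟨hi1, hsnd⟩ := hFeq
      by_cases hb : (p : Fin N × ↥A).2 = (q : Fin N × ↥A).2
      · exact Subtype.ext (Prod.ext hi1 hb)
      · exfalso
        have hpmem : (p : Fin N × ↥A).2 ∈ fam (q : Fin N × ↥A).1 := by
          rw [← hi1]; exact p.2
        have hdisj :
            Disjoint
              (closedBall ((p : Fin N × ↥A).2 : Fin n → ℝ) (sfun (p : Fin N × ↥A).2 / 2))
              (closedBall ((q : Fin N × ↥A).2 : Fin n → ℝ) (sfun (q : Fin N × ↥A).2 / 2)) :=
          hfdisj (q : Fin N × ↥A).1 hpmem q.2 hb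
        obtain ⟨i, hisep⟩ := exists_coord_sep
          (by linarith [hs0 (p : Fin N × ↥A).2] : (0:ℝ) ≤ sfun (p : Fin N × ↥A).2 / 2)
          (by linarith [hs0 (q : Fin N × ↥A).2] : (0:ℝ) ≤ sfun (q : Fin N × ↥A).2 / 2)
          hdisj
        have hsig := congrFun hsnd i
        exact sig_contradiction (hAQ (p : Fin N × ↥A).2.2) (hAQ (q : Fin N × ↥A).2.2)
          (hs0 _) (hsh _) (hs0 _) (hsh _) i (hp.1 i) (hp.2 i) (hq.1 i) (hq.2 i)
          (by linarith [hisep]) hsig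
    calc T.encard = (F '' T).encard := (hinj.encard_image).symm
      _ ≤ (univ : Set (Fin N × (Fin n → Fin 3))).encard :=
            Set.encard_le_encard (subset_univ _)
      _ = ((N * 3 ^ n : ℕ) : ℕ∞) := by
            rw [Set.encard_univ, ENat.card_eq_coe_fintype_card]
            norm_cast
            simp [Fintype.card_fun]
      _ ≤ ((N * 3 ^ n + 1 : ℕ) : ℕ∞) := by exact_mod_cast Nat.le_succ _
  · -- a.e. coverage
    have hSnull : μ (E \ S) = 0 := by
      refine measure_mono_null
        (show E \ S ⊆ (Icc a (fun i => a i + h)) \ S from fun z hz => ⟨hEQ hz.1, hz.2⟩)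
        (hμ ?_)
      have hamem : a ∈ Icc a (fun i => a i + h) :=
        ⟨le_refl a, fun i => by dsimp; linarith⟩
      have := cube_diff_inner_null a h a h
      rwa [cube_at_h hh hamem, cc_at_h hh hamem] at this
    have hGnull : μ ({x | ¬ Tendsto (fun r => ν (E ∩ closedBall x r) / ν (closedBall x r))
        (𝓝[>] (0:ℝ)) (𝓝 1)} ∩ E) = 0 := by
      have h0 : (ν.restrict E) {x | ¬ Tendsto
          (fun r => ν (E ∩ closedBall x r) / ν (closedBall x r))
          (𝓝[>] (0:ℝ)) (𝓝 1)} = 0 := ae_iff.mp hdenae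
      have h1 : ν ({x | ¬ Tendsto (fun r => ν (E ∩ closedBall x r) / ν (closedBall x r))
          (𝓝[>] (0:ℝ)) (𝓝 1)} ∩ E) = 0 := by
        rw [← Measure.restrict_apply' hEmeas]; exact h0
      rw [hνapp, inter_eq_left.2 (inter_subset_right.trans hEQ)] at h1
      exact h1
    refine measure_mono_null ?_ (measure_union_null hSnull hGnull)
    intro z hz
    by_cases hzS : z ∈ S
    · by_cases hzg : Tendsto (fun r => ν (E ∩ closedBall z r) / ν (closedBall z r))
        (𝓝[>] (0:ℝ)) (𝓝 1)
      · exfalso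
        have hzA : z ∈ A := ⟨hz.1, hzS, hzg⟩
        have hzr : z ∈ range pkg.c := Set.mem_range.2 ⟨⟨z, hzA⟩, rfl⟩
        have := hfcov hzr
        rw [mem_iUnion] at this
        obtain ⟨i, hi⟩ := this
        rw [mem_iUnion] at hi
        obtain ⟨j, hj⟩ := hi
        rw [mem_iUnion] at hj
        obtain ⟨hjf, hjz⟩ := hj
        have hzcube : z ∈ cube a h (j : Fin n → ℝ) (sfun j) :=
          closedBall_inter_subset_cube (hs0 j).le
            ⟨ball_subset_closedBall hjz, hEQ hz.1⟩
        exact hz.2 (mem_iUnion.2 ⟨⟨(i, j), hjf⟩, hzcube⟩)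
      · exact Or.inr ⟨hzg, hz.1⟩
    · exact Or.inl ⟨hz.1, hzS⟩
end
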